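/- arXiv:1903.11147 — 4 statements merged into one kernel-verified Lean document; each statement's English description precedes it below -/
import Mathlib

section
/- For all nonnegative integers a, b and every integer c, the following identity of rational numbers holds: C(2a, a+c) · C(2b, b+c) = ((2a)!(2b)!/(a+b)!) · Σ_l 1/((a−l)!(b−l)!(l+c)!(l−c)!), where the (finite) sum ranges over all integers l with |c| ≤ l ≤ min(a,b) (the sum is empty, and both sides vanish, when |c| > min(a,b)). -/
/-- Binomial coefficient `C(n, j)` for `n : ℕ` and `j : ℤ`, with the convention that
it is zero unless `0 ≤ j ≤ n`, as a rational number. -/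
def ichoose (n : ℕ) (j : ℤ) : ℚ := if 0 ≤ j then (n.choose j.toNat : ℚ) else 0

private lemma vand (a b c : ℕ) (hca : c ≤ a) (hcb : c ≤ b) :
    (a+b).choose (b+c) =
      ∑ l ∈ Finset.Icc c (min a b), (a+c).choose (l+c) * (b-c).choose (l-c) := by
  have h : a + b = (a+c) + (b-c) := by omega
  rw [h, Nat.add_choose_eq,
    Finset.Nat.sum_antidiagonal_eq_sum_range_succ
      (fun i j => (a+c).choose i * (b-c).choose j)]
  rw [show ∑ l ∈ Finset.Icc c (min a b), (a+c).choose (l+c) * (b-c).choose (l-c) =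
      ∑ k ∈ (Finset.Icc c (min a b)).image (· + c),
        (a+c).choose k * (b-c).choose (b+c-k) from ?_]
  · refine (Finset.sum_subset ?_ ?_).symm
    · intro k hk
      simp only [Finset.mem_image, Finset.mem_Icc, Finset.mem_range] at *
      omega
    · intro k hk hnk
      simp only [Finset.mem_range] at hk
      have h2 : k < 2*c ∨ min a b + c < k := by
        by_contra hcon
        push_neg at hcon
        exact hnk (Finset.mem_image.mpr ⟨k - c,
          Finset.mem_Icc.mpr ⟨by omega, by omega⟩, by omega⟩)
      rcases h2 with h2 | h2
      · rw [Nat.choose_eq_zero_of_lt (show b - c < b + c - k by omega), mul_zero]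
      · rw [Nat.choose_eq_zero_of_lt (show a + c < k by omega), zero_mul]
  · rw [Finset.sum_image (by intro x _ y _ h; exact Nat.add_right_cancel h)]
    refine Finset.sum_congr rfl fun l hl => ?_
    rw [Finset.mem_Icc] at hl
    congr 1
    rw [show b + c - (l + c) = (b-c) - (l-c) by omega, Nat.choose_symm (by omega)]


private lemma key (a b c : ℕ) (hca : c ≤ a) (hcb : c ≤ b)
    (hv : (a+b).choose (b+c) =
      ∑ l ∈ Finset.Icc c (min a b), (a+c).choose (l+c) * (b-c).choose (l-c)) :
    ((2*a).choose (a+c) * (2*b).choose (b+c) : ℚ) =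
      (((2*a).factorial * (2*b).factorial : ℕ) : ℚ) / ((a+b).factorial : ℚ) *
        ∑ l ∈ Finset.Icc c (min a b),
          1 / (((a-l).factorial * (b-l).factorial * (l+c).factorial * (l-c).factorial : ℕ) : ℚ) := by
  have hsum : ∑ l ∈ Finset.Icc c (min a b),
      (1 / (((a-l).factorial * (b-l).factorial * (l+c).factorial * (l-c).factorial : ℕ) : ℚ)) =
      (((a+b).choose (b+c) : ℚ)) / (((a+c).factorial : ℚ) * ((b-c).factorial : ℚ)) := by
    rw [hv]
    push_cast
    rw [Finset.sum_div]
    refine Finset.sum_congr rfl fun l hl => ?_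
    rw [Finset.mem_Icc] at hl
    have h1 : l ≤ a := by omega
    have h2 : l ≤ b := by omega
    rw [Nat.cast_choose ℚ (show l+c ≤ a+c by omega),
        Nat.cast_choose ℚ (show l-c ≤ b-c by omega),
        show a + c - (l + c) = a - l by omega,
        show b - c - (l - c) = b - l by omega]
    have f1 : ((a-l).factorial : ℚ) ≠ 0 := by exact_mod_cast (Nat.factorial_pos _).ne'
    have f2 : ((b-l).factorial : ℚ) ≠ 0 := by exact_mod_cast (Nat.factorial_pos _).ne'
    have f3 : ((l+c).factorial : ℚ) ≠ 0 := by exact_mod_cast (Nat.factorial_pos _).ne'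
    have f4 : ((l-c).factorial : ℚ) ≠ 0 := by exact_mod_cast (Nat.factorial_pos _).ne'
    have f5 : (((a+c).factorial : ℚ)) ≠ 0 := by exact_mod_cast (Nat.factorial_pos _).ne'
    have f6 : (((b-c).factorial : ℚ)) ≠ 0 := by exact_mod_cast (Nat.factorial_pos _).ne'
    field_simp
  rw [hsum,
      Nat.cast_choose ℚ (show a+c ≤ 2*a by omega),
      Nat.cast_choose ℚ (show b+c ≤ 2*b by omega),
      Nat.cast_choose ℚ (show b+c ≤ a+b by omega),
      show 2*a - (a+c) = a - c by omega,
      show 2*b - (b+c) = b - c by omega,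
      show a + b - (b+c) = a - c by omega]
  have f1 : (((a+c).factorial : ℚ)) ≠ 0 := by exact_mod_cast (Nat.factorial_pos _).ne'
  have f2 : (((a-c).factorial : ℚ)) ≠ 0 := by exact_mod_cast (Nat.factorial_pos _).ne'
  have f3 : (((b+c).factorial : ℚ)) ≠ 0 := by exact_mod_cast (Nat.factorial_pos _).ne'
  have f4 : (((b-c).factorial : ℚ)) ≠ 0 := by exact_mod_cast (Nat.factorial_pos _).ne'
  have f5 : (((a+b).factorial : ℚ)) ≠ 0 := by exact_mod_cast (Nat.factorial_pos _).ne'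
  push_cast
  field_simp


private lemma ichoose_zero' (a : ℕ) (c : ℤ) (h : (a:ℤ) < |c|) :
    ichoose (2*a) ((a:ℤ) + c) = 0 := by
  rw [Int.abs_eq_natAbs] at h
  unfold ichoose
  split_ifs with h0
  · rw [Nat.choose_eq_zero_of_lt (show 2*a < ((a:ℤ)+c).toNat by omega), Nat.cast_zero]
  · rfl

private lemma key' (a b c : ℕ) (hca : c ≤ a) (hcb : c ≤ b) :
    ((2*a).choose (a+c) * (2*b).choose (b+c) : ℚ) =
      (((2*a).factorial * (2*b).factorial : ℕ) : ℚ) / ((a+b).factorial : ℚ) *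
        ∑ l ∈ Finset.Icc c (min a b),
          1 / (((a-l).factorial * (b-l).factorial * (l+c).factorial * (l-c).factorial : ℕ) : ℚ) :=
  key a b c hca hcb (vand a b c hca hcb)

/-- Chu–Vandermonde, in the practical form of Corollary 2.2:
`C(2a, a+c) · C(2b, b+c) = ((2a)!(2b)!/(a+b)!) · Σ_l 1/((a−l)!(b−l)!(l+c)!(l−c)!)`,
the sum ranging over integers `l` with `|c| ≤ l ≤ min(a, b)`. -/
theorem stmt0 (a b : ℕ) (c : ℤ) :
    ichoose (2 * a) ((a : ℤ) + c) * ichoose (2 * b) ((b : ℤ) + c) =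
      (((2 * a).factorial * (2 * b).factorial : ℕ) : ℚ) / ((a + b).factorial : ℚ) *
        ∑ l ∈ Finset.Icc |c| (min (a : ℤ) (b : ℤ)),
          1 / ((((a : ℤ) - l).toNat.factorial * ((b : ℤ) - l).toNat.factorial *
                (l + c).toNat.factorial * (l - c).toNat.factorial : ℕ) : ℚ) := by
  rcases le_or_gt |c| (min (a:ℤ) b) with hle | hlt
  · rw [Int.abs_eq_natAbs] at hle ⊢
    have hna : c.natAbs ≤ a := by omega
    have hnb : c.natAbs ≤ b := by omega
    have hresum : ∀ (f : ℕ → ℚ) (g : ℤ → ℚ),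
        (∀ l ∈ Finset.Icc (c.natAbs:ℤ) (min (a:ℤ) b), g l = f l.toNat) →
        ∑ l ∈ Finset.Icc (c.natAbs:ℤ) (min (a:ℤ) b), g l
          = ∑ l ∈ Finset.Icc c.natAbs (min a b), f l := by
      intro f g hfg
      refine Finset.sum_nbij' (fun l => l.toNat) (fun l => (l : ℤ)) ?_ ?_ ?_ ?_ hfg <;>
        intro x hx <;> simp only [Finset.mem_Icc] at * <;> omega
    rw [hresum (fun l => 1 / (((a-l).factorial * (b-l).factorial *
          (l+c.natAbs).factorial * (l-c.natAbs).factorial : ℕ) : ℚ)) _ ?_]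
    · have e1 : ichoose (2*a) ((a:ℤ)+c) = ((2*a).choose (a+c.natAbs) : ℚ) := by
        unfold ichoose
        rw [if_pos (by omega)]
        rcases Int.natAbs_eq c with hc | hc
        · rw [show ((a:ℤ)+c).toNat = a+c.natAbs by omega]
        · rw [show ((a:ℤ)+c).toNat = a-c.natAbs by omega,
            ← Nat.choose_symm (show a+c.natAbs ≤ 2*a by omega),
            show 2*a - (a+c.natAbs) = a-c.natAbs by omega]
      have e2 : ichoose (2*b) ((b:ℤ)+c) = ((2*b).choose (b+c.natAbs) : ℚ) := by
        unfold ichoose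
        rw [if_pos (by omega)]
        rcases Int.natAbs_eq c with hc | hc
        · rw [show ((b:ℤ)+c).toNat = b+c.natAbs by omega]
        · rw [show ((b:ℤ)+c).toNat = b-c.natAbs by omega,
            ← Nat.choose_symm (show b+c.natAbs ≤ 2*b by omega),
            show 2*b - (b+c.natAbs) = b-c.natAbs by omega]
      rw [e1, e2]; exact key' a b c.natAbs hna hnb
    · intro l hl
      simp only [Finset.mem_Icc] at hl
      have e : ((a:ℤ) - l).toNat.factorial * ((b:ℤ) - l).toNat.factorial *
          (l + c).toNat.factorial * (l - c).toNat.factorial =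
          (a - l.toNat).factorial * (b - l.toNat).factorial *
          (l.toNat + c.natAbs).factorial * (l.toNat - c.natAbs).factorial := by
        rcases Int.natAbs_eq c with hc | hc
        · rw [show ((a:ℤ)-l).toNat = a - l.toNat by omega,
              show ((b:ℤ)-l).toNat = b - l.toNat by omega,
              show (l+c).toNat = l.toNat + c.natAbs by omega,
              show (l-c).toNat = l.toNat - c.natAbs by omega]
        · rw [show ((a:ℤ)-l).toNat = a - l.toNat by omega,
              show ((b:ℤ)-l).toNat = b - l.toNat by omega,
              show (l+c).toNat = l.toNat - c.natAbs by omega,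
              show (l-c).toNat = l.toNat + c.natAbs by omega]
          ring
      rw [e]
  · rw [Finset.Icc_eq_empty (not_le.mpr hlt), Finset.sum_empty, mul_zero]
    rcases min_lt_iff.mp hlt with h | h
    · rw [ichoose_zero' a c h, zero_mul]
    · rw [ichoose_zero' b c h, mul_zero]
end

section
/- For every integer m ≥ 2 and all nonnegative integers a₁, …, a_m, one has Υ_m(a₁,…,a_m) = Σ_{l=0}^{min(a₁,a₂)} ((2a₁)!(2a₂)!)/((a₁+a₂)!(2l)!(a₁−l)!(a₂−l)!) · Υ_{m−1}(l, a₃, …, a_m), as an identity of rational numbers. -/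
/-- `Υ_{m+1}(a₀, …, a_m) = Σ_{k ∈ ℤ} (−1)^k ∏ᵢ C(2aᵢ, aᵢ + k)`.  Only integers `k`
with `|k| ≤ a₀` can contribute (the factor `i = 0` vanishes otherwise), so the sum
over all of `ℤ` equals the finite sum over `|k| ≤ a₀`. -/
noncomputable def ups {m : ℕ} (a : Fin (m + 1) → ℕ) : ℚ :=
  ∑ k ∈ Finset.Icc (-(a 0 : ℤ)) (a 0 : ℤ),
    (-1 : ℚ) ^ k * ∏ i, ichoose (2 * a i) ((a i : ℤ) + k)

lemma ichoose_of_neg {n : ℕ} {j : ℤ} (h : j < 0) : ichoose n j = 0 :=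
  if_neg (by omega)

lemma ichoose_of_gt {n : ℕ} {j : ℤ} (h : (n : ℤ) < j) : ichoose n j = 0 := by
  unfold ichoose
  rw [if_pos (by omega), Nat.choose_eq_zero_of_lt (by omega), Nat.cast_zero]

lemma ichoose_nonneg {n : ℕ} {j : ℤ} (h : 0 ≤ j) :
    ichoose n j = (n.choose j.toNat : ℚ) := if_pos h

lemma ichoose_symm (n : ℕ) (k : ℤ) :
    ichoose (2 * n) ((n : ℤ) + k) = ichoose (2 * n) ((n : ℤ) - k) := by
  rcases lt_or_ge (n : ℤ) k with h | h
  · rw [ichoose_of_gt (by push_cast; omega), ichoose_of_neg (by omega)]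
  rcases lt_or_ge k (-(n : ℤ)) with h2 | h2
  · rw [ichoose_of_neg (by omega), ichoose_of_gt (by push_cast; omega)]
  · rw [ichoose_nonneg (by omega), ichoose_nonneg (by omega)]
    congr 1
    have h3 : ((n : ℤ) - k).toNat = 2 * n - ((n : ℤ) + k).toNat := by omega
    rw [h3, Nat.choose_symm (by omega)]

/-- Vandermonde-type identity used for the core step. -/
lemma vdm (a b κ : ℕ) (ha : κ ≤ a) (hb : κ ≤ b) :
    ∑ l ∈ Finset.range (min a b + 1),
      (if l < κ then 0 else (a + κ).choose (l + κ) * (b - κ).choose (l - κ))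
      = (a + b).choose (a - κ) := by
  have key : (a + b).choose (a - κ) = ∑ j ∈ Finset.range (a - κ + 1),
      (a + κ).choose (a - κ - j) * (b - κ).choose j := by
    have h1 : a + b = (a + κ) + (b - κ) := by omega
    rw [h1, Nat.add_choose_eq, Finset.Nat.sum_antidiagonal_eq_sum_range_succ_mk,
      ← Finset.sum_range_reflect]
    apply Finset.sum_congr rfl
    intro j hj
    simp only [Finset.mem_range] at hj
    have h2 : a - κ + 1 - 1 - j = a - κ - j := by omega
    have h3 : a - κ - (a - κ - j) = j := by omega
    rw [h2, h3]
  rw [key]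
  have step1 : ∑ l ∈ Finset.range (min a b + 1),
      (if l < κ then 0 else (a + κ).choose (l + κ) * (b - κ).choose (l - κ))
      = ∑ l ∈ Finset.Ico κ (min a b + 1),
        (if l < κ then 0 else (a + κ).choose (l + κ) * (b - κ).choose (l - κ)) := by
    refine (Finset.sum_subset ?_ ?_).symm
    · intro x hx
      simp only [Finset.mem_Ico] at hx
      simp only [Finset.mem_range]
      omega
    · intro x hx hx2
      simp only [Finset.mem_range] at hx
      simp only [Finset.mem_Ico] at hx2
      rw [if_pos (by omega)]
  rw [step1, Finset.sum_Ico_eq_sum_range]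
  have hrange : min a b + 1 - κ = min a b - κ + 1 := by omega
  rw [hrange]
  have step2 : ∀ j ∈ Finset.range (min a b - κ + 1),
      (if κ + j < κ then 0 else (a + κ).choose (κ + j + κ) * (b - κ).choose (κ + j - κ))
      = (a + κ).choose (a - κ - j) * (b - κ).choose j := by
    intro j hj
    simp only [Finset.mem_range] at hj
    rw [if_neg (by omega)]
    have h4 : κ + j + κ = 2 * κ + j := by omega
    have h5 : κ + j - κ = j := by omega
    have h6 : a - κ - j = (a + κ) - (2 * κ + j) := by omega
    rw [h4, h5, h6, Nat.choose_symm (by omega)]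
  rw [Finset.sum_congr rfl step2]
  apply Finset.sum_subset (Finset.range_subset_range.mpr (by omega))
  intro j hj hj2
  simp only [Finset.mem_range] at hj hj2
  have hbj : b - κ < j := by omega
  rw [Nat.choose_eq_zero_of_lt hbj, mul_zero]

/-- The core identity, nonnegative-`k` natural-number version, in `ℚ`. -/
lemma core_nat (a b κ : ℕ) (hka : κ ≤ a) (hkb : κ ≤ b) :
    ((2 * a).choose (a + κ) : ℚ) * ((2 * b).choose (b + κ) : ℚ) =
    ∑ l ∈ Finset.range (min a b + 1),
      (((2 * a).factorial * (2 * b).factorial : ℕ) : ℚ) /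
          (((a + b).factorial * (2 * l).factorial *
            (a - l).factorial * (b - l).factorial : ℕ) : ℚ) *
        ((2 * l).choose (l + κ) : ℚ) := by
  have hC : ((a + b).choose (a - κ) : ℚ) ≠ 0 := by
    exact_mod_cast (Nat.choose_pos (by omega)).ne'
  have key : ∀ l ∈ Finset.range (min a b + 1),
      (((2 * a).factorial * (2 * b).factorial : ℕ) : ℚ) /
          (((a + b).factorial * (2 * l).factorial *
            (a - l).factorial * (b - l).factorial : ℕ) : ℚ) *
        ((2 * l).choose (l + κ) : ℚ)
      = ((2 * a).choose (a + κ) : ℚ) * ((2 * b).choose (b + κ) : ℚ) *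
          (((if l < κ then 0 else (a + κ).choose (l + κ) * (b - κ).choose (l - κ)) : ℕ) : ℚ) /
          ((a + b).choose (a - κ) : ℚ) := by
    intro l hl
    simp only [Finset.mem_range] at hl
    by_cases hlκ : l < κ
    · rw [if_pos hlκ, Nat.choose_eq_zero_of_lt (by omega)]
      simp
    · rw [if_neg hlκ]
      have h1 : κ ≤ l := by omega
      have h2 : l ≤ a := by omega
      have h3 : l ≤ b := by omega
      push_cast
      rw [Nat.cast_choose ℚ (show a + κ ≤ 2 * a by omega),
        Nat.cast_choose ℚ (show b + κ ≤ 2 * b by omega),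
        Nat.cast_choose ℚ (show l + κ ≤ 2 * l by omega),
        Nat.cast_choose ℚ (show l + κ ≤ a + κ by omega),
        Nat.cast_choose ℚ (show l - κ ≤ b - κ by omega),
        Nat.cast_choose ℚ (show a - κ ≤ a + b by omega)]
      have e1 : 2 * a - (a + κ) = a - κ := by omega
      have e2 : 2 * b - (b + κ) = b - κ := by omega
      have e3 : 2 * l - (l + κ) = l - κ := by omega
      have e4 : a + κ - (l + κ) = a - l := by omega
      have e5 : b - κ - (l - κ) = b - l := by omega
      have e6 : a + b - (a - κ) = b + κ := by omega
      rw [e1, e2, e3, e4, e5, e6]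
      have f : ∀ n : ℕ, ((n.factorial : ℚ)) ≠ 0 :=
        fun n => Nat.cast_ne_zero.mpr n.factorial_ne_zero
      field_simp
  rw [Finset.sum_congr rfl key, ← Finset.sum_div, ← Finset.mul_sum, ← Nat.cast_sum,
    vdm a b κ hka hkb, mul_div_assoc, div_self hC, mul_one]

lemma core_int_nonneg (a b : ℕ) (k : ℤ) (hk : 0 ≤ k) :
    ichoose (2 * a) ((a : ℤ) + k) * ichoose (2 * b) ((b : ℤ) + k) =
    ∑ l ∈ Finset.range (min a b + 1),
      (((2 * a).factorial * (2 * b).factorial : ℕ) : ℚ) /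
          (((a + b).factorial * (2 * l).factorial *
            (a - l).factorial * (b - l).factorial : ℕ) : ℚ) *
        ichoose (2 * l) ((l : ℤ) + k) := by
  lift k to ℕ using hk
  by_cases hm : k ≤ min a b
  · have ta : (((a : ℤ)) + (k : ℕ)).toNat = a + k := by omega
    have tb : (((b : ℤ)) + (k : ℕ)).toNat = b + k := by omega
    rw [ichoose_nonneg (by positivity), ichoose_nonneg (by positivity), ta, tb,
      core_nat a b k (by omega) (by omega)]
    apply Finset.sum_congr rfl
    intro l hl
    rw [ichoose_nonneg (by positivity)]
    have tl : (((l : ℤ)) + (k : ℕ)).toNat = l + k := by omega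
    rw [tl]
  · have h0 : a < k ∨ b < k := by omega
    have hrhs : ∑ l ∈ Finset.range (min a b + 1),
        (((2 * a).factorial * (2 * b).factorial : ℕ) : ℚ) /
            (((a + b).factorial * (2 * l).factorial *
              (a - l).factorial * (b - l).factorial : ℕ) : ℚ) *
          ichoose (2 * l) ((l : ℤ) + k) = 0 := by
      apply Finset.sum_eq_zero
      intro l hl
      simp only [Finset.mem_range] at hl
      rw [ichoose_of_gt (by push_cast; omega), mul_zero]
    rw [hrhs]
    rcases h0 with h | h
    · rw [ichoose_of_gt (by push_cast; omega), zero_mul]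
    · rw [ichoose_of_gt (n := 2 * b) (j := (b : ℤ) + k) (by push_cast; omega), mul_zero]

lemma core (a b : ℕ) (k : ℤ) :
    ichoose (2 * a) ((a : ℤ) + k) * ichoose (2 * b) ((b : ℤ) + k) =
    ∑ l ∈ Finset.range (min a b + 1),
      (((2 * a).factorial * (2 * b).factorial : ℕ) : ℚ) /
          (((a + b).factorial * (2 * l).factorial *
            (a - l).factorial * (b - l).factorial : ℕ) : ℚ) *
        ichoose (2 * l) ((l : ℤ) + k) := by
  rcases le_or_gt 0 k with hk | hk
  · exact core_int_nonneg a b k hk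
  · have h := core_int_nonneg a b (-k) (by omega)
    simp only [← sub_eq_add_neg] at h
    simp only [← ichoose_symm] at h
    exact h

/-- The Guo–Jouhet–Zeng recursion: for every `m ≥ 2` (here the arity is `m + 2`) and
all nonnegative integers `a₀, …, a_{m+1}`,
`Υ_{m+2}(a₀,…,a_{m+1}) = Σ_{l=0}^{min(a₀,a₁)}
  (2a₀)!(2a₁)! / ((a₀+a₁)!(2l)!(a₀−l)!(a₁−l)!) · Υ_{m+1}(l, a₂, …, a_{m+1})`. -/
theorem stmt1 (m : ℕ) (a : Fin (m + 2) → ℕ) :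
    ups a =
      ∑ l ∈ Finset.range (min (a 0) (a 1) + 1),
        (((2 * a 0).factorial * (2 * a 1).factorial : ℕ) : ℚ) /
            (((a 0 + a 1).factorial * (2 * l).factorial *
              (a 0 - l).factorial * (a 1 - l).factorial : ℕ) : ℚ) *
          ups (Fin.cons l (fun i : Fin m => a i.succ.succ)) := by
  have hprod : ∀ k : ℤ, ∏ i : Fin (m + 2), ichoose (2 * a i) ((a i : ℤ) + k)
      = ichoose (2 * a 0) ((a 0 : ℤ) + k) * ichoose (2 * a 1) ((a 1 : ℤ) + k) *
        ∏ i : Fin m, ichoose (2 * a i.succ.succ) ((a i.succ.succ : ℤ) + k) := by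
    intro k
    rw [Fin.prod_univ_succ, Fin.prod_univ_succ, ← mul_assoc]
    rfl
  have step1 : ups a = ∑ l ∈ Finset.range (min (a 0) (a 1) + 1),
      ∑ k ∈ Finset.Icc (-(a 0 : ℤ)) (a 0 : ℤ),
        (((2 * a 0).factorial * (2 * a 1).factorial : ℕ) : ℚ) /
            (((a 0 + a 1).factorial * (2 * l).factorial *
              (a 0 - l).factorial * (a 1 - l).factorial : ℕ) : ℚ) *
          ((-1 : ℚ) ^ k * (ichoose (2 * l) ((l : ℤ) + k) *
            ∏ i : Fin m, ichoose (2 * a i.succ.succ) ((a i.succ.succ : ℤ) + k))) := by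
    rw [ups, Finset.sum_comm]
    apply Finset.sum_congr rfl
    intro k _
    rw [hprod k]
    rw [core (a 0) (a 1) k, Finset.sum_mul, Finset.mul_sum]
    apply Finset.sum_congr rfl
    intro l _
    ring
  rw [step1]
  apply Finset.sum_congr rfl
  intro l hl
  simp only [Finset.mem_range] at hl
  rw [← Finset.mul_sum]
  congr 1
  have hsub : Finset.Icc (-(l : ℤ)) (l : ℤ) ⊆ Finset.Icc (-(a 0 : ℤ)) (a 0 : ℤ) :=
    Finset.Icc_subset_Icc (by omega) (by omega)
  rw [← Finset.sum_subset hsub (by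
    intro k hk hk2
    simp only [Finset.mem_Icc] at hk hk2
    have : k < -(l : ℤ) ∨ (l : ℤ) < k := by omega
    rcases this with h | h
    · rw [ichoose_of_neg (by omega), zero_mul, mul_zero]
    · rw [ichoose_of_gt (by push_cast; omega), zero_mul, mul_zero])]
  rw [ups]
  have h0 : (Fin.cons l (fun i : Fin m => a i.succ.succ) : Fin (m + 1) → ℕ) 0 = l :=
    Fin.cons_zero _ _
  rw [h0]
  apply Finset.sum_congr rfl
  intro k _
  rw [Fin.prod_univ_succ]
  simp only [Fin.cons_zero, Fin.cons_succ]
end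

section
/- For all integers p, q with 1 ≤ q ≤ p, one has N_{2p, 2q+1} = (−1)^{p+q} · ((2p)!)^{2q+1} / (∏_{ν=0}^{2q} (2(p−q+ν))!) · Υ_{2q+1}(p−q, p−q+1, …, p+q), as an identity of rational numbers. -/
/-- `N_{k,r} = Σ_{j=0}^{k−r+1} (−1)^{rj} C(k,j) C(k,j+1) ⋯ C(k,j+r−1)`. -/
def Nkr (k r : ℕ) : ℤ :=
  ∑ j ∈ Finset.range (k - r + 2),
    (-1 : ℤ) ^ (r * j) * ∏ ν ∈ Finset.range r, (k.choose (j + ν) : ℤ)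

open Finset

lemma key_prod (p q t : ℕ) (hqp : q ≤ p) (ht : t + 2*q ≤ 2*p) :
    (∏ ν ∈ range (2*q+1), ((2*p).choose (t+ν) : ℚ)) *
      (∏ ν ∈ range (2*q+1), ((2*(p-q+ν)).factorial : ℚ)) =
    ((2*p).factorial : ℚ)^(2*q+1) *
      ∏ ν ∈ range (2*q+1), ((2*(p-q+ν)).choose (t+ν) : ℚ) := by
  have hX : ((∏ ν ∈ range (2*q+1), ((t+ν).factorial : ℚ)) *
            (∏ ν ∈ range (2*q+1), (((2*p - (t+ν)).factorial : ℕ) : ℚ))) ≠ 0 := by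
    positivity
  apply mul_right_cancel₀ hX
  have e3 : ∏ ν ∈ range (2*q+1), ((2*p - (t+ν)).factorial : ℚ) =
      ∏ ν ∈ range (2*q+1), ((2*(p-q+ν) - (t+ν)).factorial : ℚ) := by
    rw [← Finset.prod_range_reflect (fun ν => ((2*p - (t+ν)).factorial : ℚ)) (2*q+1)]
    apply Finset.prod_congr rfl
    intro ν hν
    simp only [mem_range] at hν
    congr 2
    omega
  have h1 : (∏ ν ∈ range (2*q+1), ((2*p).choose (t+ν) : ℚ)) *
      (∏ ν ∈ range (2*q+1), ((t+ν).factorial : ℚ)) *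
      (∏ ν ∈ range (2*q+1), ((2*p - (t+ν)).factorial : ℚ)) =
      ((2*p).factorial : ℚ)^(2*q+1) := by
    rw [← Finset.prod_mul_distrib, ← Finset.prod_mul_distrib]
    rw [Finset.prod_congr rfl (fun ν hν => ?_), Finset.prod_const, card_range]
    simp only [mem_range] at hν
    have h := Nat.choose_mul_factorial_mul_factorial (show t+ν ≤ 2*p by omega)
    exact_mod_cast congrArg (Nat.cast (R := ℚ)) h
  have h2 : (∏ ν ∈ range (2*q+1), ((2*(p-q+ν)).choose (t+ν) : ℚ)) *
      (∏ ν ∈ range (2*q+1), ((t+ν).factorial : ℚ)) *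
      (∏ ν ∈ range (2*q+1), ((2*p - (t+ν)).factorial : ℚ)) =
      ∏ ν ∈ range (2*q+1), ((2*(p-q+ν)).factorial : ℚ) := by
    rw [e3, ← Finset.prod_mul_distrib, ← Finset.prod_mul_distrib]
    apply Finset.prod_congr rfl
    intro ν hν
    simp only [mem_range] at hν
    have h := Nat.choose_mul_factorial_mul_factorial (show t+ν ≤ 2*(p-q+ν) by omega)
    exact_mod_cast congrArg (Nat.cast (R := ℚ)) h
  calc (∏ ν ∈ range (2*q+1), ((2*p).choose (t+ν) : ℚ)) *
      (∏ ν ∈ range (2*q+1), ((2*(p-q+ν)).factorial : ℚ)) *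
      ((∏ ν ∈ range (2*q+1), ((t+ν).factorial : ℚ)) *
       (∏ ν ∈ range (2*q+1), ((2*p - (t+ν)).factorial : ℚ)))
      = ((2*p).factorial : ℚ)^(2*q+1) *
        (∏ ν ∈ range (2*q+1), ((2*(p-q+ν)).factorial : ℚ)) := by
        linear_combination (∏ ν ∈ range (2*q+1), ((2*(p-q+ν)).factorial : ℚ)) * h1
    _ = ((2*p).factorial : ℚ)^(2*q+1) *
        (∏ ν ∈ range (2*q+1), ((2*(p-q+ν)).choose (t+ν) : ℚ)) *
        ((∏ ν ∈ range (2*q+1), ((t+ν).factorial : ℚ)) *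
         (∏ ν ∈ range (2*q+1), ((2*p - (t+ν)).factorial : ℚ))) := by
        linear_combination ((2*p).factorial : ℚ)^(2*q+1) * h2.symm

lemma ups_eq (p q : ℕ) (hqp : q ≤ p) :
    ups (fun ν : Fin (2 * q + 1) => p - q + (ν : ℕ)) =
      (-1 : ℚ) ^ (p + q) *
        ∑ t ∈ range (2 * (p - q) + 1),
          (-1 : ℚ) ^ t *
            ∏ ν ∈ range (2 * q + 1), ((2 * (p - q + ν)).choose (t + ν) : ℚ) := by
  unfold ups
  have hmap : Finset.Icc (-((p-q : ℕ):ℤ)) ((p-q : ℕ):ℤ) =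
      Finset.map ⟨fun t : ℕ => (t:ℤ) - (p-q : ℕ), show Function.Injective (fun t : ℕ => (t:ℤ) - (p-q : ℕ)) by intro a b h; simp only [] at h; omega⟩
        (Finset.range (2*(p-q)+1)) := by
    ext k
    simp only [Finset.mem_Icc, Finset.mem_map, Finset.mem_range,
      Function.Embedding.coeFn_mk]
    constructor
    · rintro ⟨h1, h2⟩
      exact ⟨(k + (p-q : ℕ)).toNat, by omega, by omega⟩
    · rintro ⟨a, ha, rfl⟩
      omega
  simp only [show ((fun ν : Fin (2 * q + 1) => p - q + (ν : ℕ)) 0 : ℕ) = p - q by simp]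
  rw [hmap, Finset.sum_map, Finset.mul_sum]
  apply Finset.sum_congr rfl
  intro t ht
  simp only [Function.Embedding.coeFn_mk]
  have hm : (-1:ℚ)^(p-q) = (-1:ℚ)^(p+q) := by
    rw [show p+q = (p-q)+2*q by omega, pow_add, pow_mul]; norm_num
  have hz : (-1:ℚ)^((t:ℤ)-((p-q:ℕ):ℤ)) = (-1:ℚ)^(p+q) * (-1:ℚ)^t := by
    rw [zpow_sub₀ (by norm_num : (-1:ℚ) ≠ 0), zpow_natCast, zpow_natCast,
      div_eq_mul_inv, ← inv_pow, inv_neg, inv_one, hm, mul_comm]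
  rw [hz]
  rw [Fin.prod_univ_eq_prod_range
    (fun ν : ℕ => ichoose (2*(p-q+ν)) (((p-q+ν : ℕ):ℤ) + ((t:ℤ) - ((p-q:ℕ):ℤ))))]
  rw [Finset.prod_congr rfl (fun ν hν => ?_)]
  · ring
  · have harg : ((p-q+ν : ℕ):ℤ) + ((t:ℤ) - ((p-q:ℕ):ℤ)) = ((t+ν : ℕ) : ℤ) := by
      push_cast; omega
    rw [harg]
    simp only [ichoose, if_pos (Int.natCast_nonneg _), Int.toNat_natCast]

/-- For all integers `p, q` with `1 ≤ q ≤ p`,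
`N_{2p, 2q+1} = (−1)^{p+q} · ((2p)!)^{2q+1} / (∏_{ν=0}^{2q} (2(p−q+ν))!)
  · Υ_{2q+1}(p−q, p−q+1, …, p+q)`. -/
theorem stmt6 (p q : ℕ) (hq : 1 ≤ q) (hqp : q ≤ p) :
    (Nkr (2 * p) (2 * q + 1) : ℚ) =
      (-1 : ℚ) ^ (p + q) * ((2 * p).factorial : ℚ) ^ (2 * q + 1) /
          (∏ ν ∈ Finset.range (2 * q + 1), ((2 * (p - q + ν)).factorial : ℚ)) *
        ups (fun ν : Fin (2 * q + 1) => p - q + (ν : ℕ)) := by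
  have hD : (∏ ν ∈ Finset.range (2*q+1), ((2*(p-q+ν)).factorial : ℚ)) ≠ 0 := by
    positivity
  rw [ups_eq p q hqp]
  set S := ∑ t ∈ range (2 * (p - q) + 1),
      (-1 : ℚ) ^ t *
        ∏ ν ∈ range (2 * q + 1), ((2 * (p - q + ν)).choose (t + ν) : ℚ) with hS
  rw [show (-1 : ℚ) ^ (p + q) * ((2 * p).factorial : ℚ) ^ (2 * q + 1) /
          (∏ ν ∈ Finset.range (2 * q + 1), ((2 * (p - q + ν)).factorial : ℚ)) *
        ((-1 : ℚ) ^ (p + q) * S)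
      = ((-1 : ℚ) ^ (p + q))^2 * (((2 * p).factorial : ℚ) ^ (2 * q + 1) /
          (∏ ν ∈ Finset.range (2 * q + 1), ((2 * (p - q + ν)).factorial : ℚ)) * S) from by ring,
    show ((-1 : ℚ) ^ (p + q))^2 = 1 from by rw [← pow_mul, mul_comm, pow_mul]; norm_num,
    one_mul]
  unfold Nkr
  push_cast
  rw [hS, Finset.mul_sum]
  -- extend both sums to range (2*p+2)
  have hL : ∑ j ∈ range (2*p - (2*q+1) + 2),
        (-1:ℚ)^((2*q+1)*j) * ∏ ν ∈ range (2*q+1), ((2*p).choose (j+ν) : ℚ)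
      = ∑ j ∈ range (2*p+2),
        (-1:ℚ)^((2*q+1)*j) * ∏ ν ∈ range (2*q+1), ((2*p).choose (j+ν) : ℚ) := by
    apply Finset.sum_subset (Finset.range_subset_range.2 (by omega))
    intro j _ hj
    simp only [mem_range, not_lt] at hj
    rw [Finset.prod_eq_zero (show 2*q ∈ range (2*q+1) by simp)
      (by rw [Nat.choose_eq_zero_of_lt (by omega)]; norm_num), mul_zero]
  have hR : ∑ t ∈ range (2*(p-q)+1),
        ((2 * p).factorial : ℚ) ^ (2 * q + 1) /
          (∏ ν ∈ Finset.range (2 * q + 1), ((2 * (p - q + ν)).factorial : ℚ)) *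
          ((-1:ℚ)^t * ∏ ν ∈ range (2*q+1), ((2*(p-q+ν)).choose (t+ν) : ℚ))
      = ∑ t ∈ range (2*p+2),
        ((2 * p).factorial : ℚ) ^ (2 * q + 1) /
          (∏ ν ∈ Finset.range (2 * q + 1), ((2 * (p - q + ν)).factorial : ℚ)) *
          ((-1:ℚ)^t * ∏ ν ∈ range (2*q+1), ((2*(p-q+ν)).choose (t+ν) : ℚ)) := by
    apply Finset.sum_subset (Finset.range_subset_range.2 (by omega))
    intro t _ ht
    simp only [mem_range, not_lt] at ht
    have h0 : ∏ ν ∈ range (2*q+1), ((2*(p-q+ν)).choose (t+ν) : ℚ) = 0 :=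
      Finset.prod_eq_zero (show 0 ∈ range (2*q+1) by simp)
        (by rw [Nat.choose_eq_zero_of_lt (by omega)]; norm_num)
    rw [h0, mul_zero, mul_zero]
  rw [hL, hR]
  apply Finset.sum_congr rfl
  intro j hj
  simp only [mem_range] at hj
  have hsign : ((-1:ℚ))^((2*q+1)*j) = (-1:ℚ)^j := by
    rw [pow_mul, show ((-1:ℚ))^(2*q+1) = -1 from by
      rw [pow_succ, pow_mul]; norm_num]
  rw [hsign]
  by_cases hc : j + 2*q ≤ 2*p
  · have hkey := key_prod p q j hqp hc
    field_simp
    linear_combination hkey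
  · have h0 : ∏ ν ∈ range (2*q+1), ((2*p).choose (j+ν) : ℚ) = 0 :=
      Finset.prod_eq_zero (show 2*q ∈ range (2*q+1) by simp)
        (show ((2*p).choose (j+2*q) : ℚ) = 0 from by
          rw [Nat.choose_eq_zero_of_lt (by omega)]; norm_num)
    have h1 : ∏ ν ∈ range (2*q+1), ((2*(p-q+ν)).choose (j+ν) : ℚ) = 0 :=
      Finset.prod_eq_zero (show 0 ∈ range (2*q+1) by simp)
        (show ((2*(p-q+0)).choose (j+0) : ℚ) = 0 from by
          rw [Nat.choose_eq_zero_of_lt (by omega)]; norm_num)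
    rw [h0, h1]
    ring
end

section
/- For every even integer k ≥ 2 and every integer r with 2 ≤ r ≤ k+1, one has N_{k,r} ≠ 0. (For r even, N_{k,r} is a sum of positive terms, hence positive; for r odd it is a nonzero alternating sum.) -/
open Finset Polynomial Complex

namespace Stmt8

def Mn (K : ℕ) : ℕ := 4 * K + 2

noncomputable def ze (K : ℕ) : ℂ := Complex.exp (Real.pi * Complex.I / (Mn K))

noncomputable def om (K : ℕ) : ℂ := ze K ^ 2

noncomputable def cc (K : ℕ) (x : ℤ) : ℂ := if 0 ≤ x then ((2 * K).choose x.toNat : ℂ) else 0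

noncomputable def Wd (K : ℕ) : Finset ℤ := Finset.Icc (-(2 * K : ℤ)) (2 * K)

noncomputable def Tr (K : ℕ) (u : ℤ → ℂ) (l : ℤ) : ℂ := ∑ t ∈ Wd K, u t * om K ^ (l * t)

lemma Mn_ne_zero (K : ℕ) : (Mn K : ℂ) ≠ 0 :=
  Nat.cast_ne_zero.mpr (by simp [Mn])

lemma om_ne_zero (K : ℕ) : om K ≠ 0 := by
  simp [om, ze, Complex.exp_ne_zero]

lemma om_eq (K : ℕ) : om K = Complex.exp (2 * Real.pi * Complex.I / (Mn K)) := by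
  rw [om, ze, ← Complex.exp_nat_mul]
  congr 1
  push_cast
  ring

lemma om_zpow (K : ℕ) (n : ℤ) :
    om K ^ n = Complex.exp ((n : ℂ) * (2 * Real.pi * Complex.I / (Mn K))) := by
  rw [om_eq, Complex.exp_int_mul]

lemma two_pi_I_ne_zero : (2 * (Real.pi : ℂ) * Complex.I : ℂ) ≠ 0 := by
  simp [Real.pi_ne_zero, Complex.I_ne_zero]

lemma om_zpow_eq_one_iff (K : ℕ) (n : ℤ) : om K ^ n = 1 ↔ (Mn K : ℤ) ∣ n := by
  rw [om_zpow, Complex.exp_eq_one_iff]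
  have hM := Mn_ne_zero K
  constructor
  · rintro ⟨c, hc⟩
    refine ⟨c, ?_⟩
    have h4 : (n : ℂ) * (2 * Real.pi * Complex.I)
        = (c * (Mn K)) * (2 * Real.pi * Complex.I) := by
      have h5 := congrArg (fun z => z * (Mn K : ℂ)) hc
      rw [mul_assoc, div_mul_cancel₀ _ hM] at h5
      rw [h5]; ring
    have h6 := mul_right_cancel₀ two_pi_I_ne_zero h4
    have h8 : n = c * (Mn K : ℤ) := by exact_mod_cast h6
    rw [h8, mul_comm]
  · rintro ⟨c, rfl⟩
    refine ⟨c, ?_⟩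
    push_cast
    field_simp

lemma om_pow_M (K : ℕ) : om K ^ (Mn K : ℤ) = 1 := by
  rw [om_zpow_eq_one_iff]

lemma orth (K : ℕ) (n : ℤ) (hn : n ≠ 0) (hn2 : n.natAbs < Mn K) :
    ∑ l ∈ range (Mn K), om K ^ ((l : ℤ) * n) = 0 := by
  have hne : om K ^ n ≠ 1 := by
    intro h
    rw [om_zpow_eq_one_iff] at h
    have := Int.le_of_dvd (abs_pos.mpr hn) ((dvd_abs _ _).mpr h)
    rw [Int.abs_eq_natAbs] at this
    omega
  have h1 : ∀ l ∈ range (Mn K), om K ^ ((l : ℤ) * n) = (om K ^ n) ^ l := by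
    intro l _
    rw [mul_comm, zpow_mul, zpow_natCast]
  rw [Finset.sum_congr rfl h1, geom_sum_eq hne]
  have : (om K ^ n) ^ Mn K = 1 := by
    rw [← zpow_natCast, ← zpow_mul, mul_comm, zpow_mul, om_pow_M, one_zpow]
  rw [this, sub_self, zero_div]

lemma conv (K : ℕ) (u v : ℤ → ℂ) (s : ℤ) :
    ∑ l ∈ range (Mn K), Tr K u l * Tr K v (s - l) =
      (Mn K : ℂ) * Tr K (fun t => u t * v t) s := by
  have key : ∀ l ∈ range (Mn K),
      Tr K u l * Tr K v (s - l)
        = ∑ a ∈ Wd K, ∑ b ∈ Wd K,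
            u a * v b * om K ^ (s * b) * om K ^ ((l : ℤ) * (a - b)) := by
    intro l _
    rw [Tr, Tr, Finset.sum_mul_sum]
    refine Finset.sum_congr rfl fun a _ => Finset.sum_congr rfl fun b _ => ?_
    have h7 : (l : ℤ) * a + (s - l) * b = s * b + (l : ℤ) * (a - b) := by ring
    rw [mul_mul_mul_comm, ← zpow_add₀ (om_ne_zero K), h7,
        zpow_add₀ (om_ne_zero K), ← mul_assoc]
  rw [Finset.sum_congr rfl key, Finset.sum_comm]
  have key2 : ∀ a ∈ Wd K,
      (∑ l ∈ range (Mn K), ∑ b ∈ Wd K,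
          u a * v b * om K ^ (s * b) * om K ^ ((l : ℤ) * (a - b)))
        = (Mn K : ℂ) * (u a * v a * om K ^ (s * a)) := by
    intro a ha
    rw [Finset.sum_comm]
    have inner : ∀ b ∈ Wd K,
        (∑ l ∈ range (Mn K), u a * v b * om K ^ (s * b) * om K ^ ((l : ℤ) * (a - b)))
          = if b = a then (Mn K : ℂ) * (u a * v a * om K ^ (s * a)) else 0 := by
      intro b hb
      rw [← Finset.mul_sum]
      by_cases hab : b = a
      · subst hab
        simp only [sub_self, mul_zero, zpow_zero, if_true]
        simp [Finset.sum_const, mul_comm]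
      · rw [orth K (a - b) (by intro h; apply hab; omega) ?_, mul_zero, if_neg hab]
        simp only [Wd, Finset.mem_Icc] at ha hb
        simp only [Mn]
        omega
    rw [Finset.sum_congr rfl inner, Finset.sum_ite_eq' (Wd K) a
      (fun _ => (Mn K : ℂ) * (u a * v a * om K ^ (s * a)))]
    simp [ha]
  rw [Finset.sum_congr rfl key2, ← Finset.mul_sum]
  rfl

noncomputable def ff (K : ℕ) (d : ℕ) (t : ℤ) : ℂ :=
  if d = 0 then cc K (K + t) else cc K (K + t + d) * cc K (K + t - d)

noncomputable def gg (K : ℕ) : ℕ → ℤ → ℂ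
  | 0 => ff K 0
  | d + 1 => fun t => gg K d t * ff K (d + 1) t

/-- `2 cos (π l / M)` -/
noncomputable def ga (K : ℕ) (l : ℤ) : ℝ := 2 * Real.cos (Real.pi * l / Mn K)

lemma ze_ne_zero (K : ℕ) : ze K ≠ 0 := Complex.exp_ne_zero _

lemma ze_zpow_exp (K : ℕ) (l : ℤ) :
    ze K ^ l = Complex.exp (((Real.pi * l / Mn K : ℝ) : ℂ) * Complex.I) := by
  rw [ze, ← Complex.exp_int_mul]
  congr 1
  have hM : ((Mn K : ℕ) : ℂ) ≠ 0 := Nat.cast_ne_zero.mpr (by simp [Mn])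
  push_cast
  field_simp

lemma ze_add_inv (K : ℕ) (l : ℤ) : ze K ^ l + (ze K ^ l)⁻¹ = ((ga K l : ℝ) : ℂ) := by
  rw [ze_zpow_exp, ← Complex.exp_neg]
  have h1 : ((ga K l : ℝ) : ℂ) = 2 * Complex.cos (((Real.pi * l / Mn K : ℝ) : ℂ)) := by
    rw [ga]
    push_cast [Complex.ofReal_cos]
    ring
  rw [h1, Complex.two_cos]
  congr 1
  ring

lemma ze_sq (K : ℕ) (e : ℤ) : om K ^ e = ze K ^ (2 * e) := by
  rw [om, ← zpow_natCast (ze K) 2, ← zpow_mul]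
  norm_num

lemma pow_pair (K : ℕ) (l : ℤ) (u v : ℕ) :
    (ze K ^ l) ^ u * ((ze K ^ l)⁻¹) ^ v = ze K ^ (l * ((u : ℤ) - v)) := by
  rw [← zpow_natCast (ze K ^ l) u, ← zpow_natCast ((ze K ^ l)⁻¹) v, inv_zpow, ← zpow_neg,
    ← zpow_mul, ← zpow_mul, ← zpow_add₀ (ze_ne_zero K)]
  congr 1
  ring

lemma cc_symm (K : ℕ) (x : ℤ) : cc K x = cc K (2 * K - x) := by
  unfold cc
  rcases lt_or_ge x 0 with hx | hx
  · rw [if_neg (by omega), if_pos (by omega)]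
    have : 2 * K < (2 * (K:ℤ) - x).toNat := by omega
    rw [Nat.choose_eq_zero_of_lt this, Nat.cast_zero]
  · rcases le_or_gt x (2 * K) with hx2 | hx2
    · rw [if_pos hx, if_pos (by omega)]
      have h1 : (2 * (K:ℤ) - x).toNat = 2 * K - x.toNat := by omega
      rw [h1, Nat.choose_symm (by omega)]
    · rw [if_pos hx, if_neg (by omega)]
      rw [Nat.choose_eq_zero_of_lt (by omega), Nat.cast_zero]

lemma Tf0 (K : ℕ) (l : ℤ) : Tr K (ff K 0) l = (((ga K l) ^ (2 * K) : ℝ) : ℂ) := by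
  push_cast
  rw [← ze_add_inv, add_pow]
  unfold Tr ff
  simp only [if_true, reduceIte]
  rw [← Finset.sum_subset (s₁ := Finset.Icc (-(K:ℤ)) K)
      (h := by intro t ht; simp only [Wd, Finset.mem_Icc] at *; omega)]
  · refine Finset.sum_nbij' (i := fun t => ((K : ℤ) + t).toNat) (j := fun u => (u : ℤ) - K)
      ?_ ?_ ?_ ?_ ?_
    · intro t ht
      simp only [Finset.mem_Icc] at ht
      simp only [Finset.mem_range]
      omega
    · intro u hu
      simp only [Finset.mem_range] at hu
      simp only [Finset.mem_Icc]
      omega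
    · intro t ht
      simp only [Finset.mem_Icc] at ht
      show ((((K:ℤ) + t).toNat : ℤ) - K) = t
      omega
    · intro u hu
      simp only [Finset.mem_range] at hu
      show (((K:ℤ) + ((u:ℤ) - K)).toNat) = u
      omega
    · intro t ht
      simp only [Finset.mem_Icc] at ht
      rw [cc, if_pos (by omega), pow_pair, ze_sq]
      have h2 : (((((K:ℤ) + t).toNat : ℕ) : ℤ) - ((2 * K - ((K:ℤ)+t).toNat : ℕ) : ℤ))
          = 2 * t := by omega
      rw [h2]
      have h3 : (2 : ℤ) * (l * t) = l * (2 * t) := by ring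
      rw [h3]
      ring
  · intro t ht hnt
    simp only [Wd, Finset.mem_Icc] at ht
    simp only [Finset.mem_Icc] at hnt
    rcases lt_or_ge t (-(K:ℤ)) with h | h
    · rw [cc, if_neg (by omega), zero_mul]
    · have h4 : 2 * K < ((K:ℤ) + t).toNat := by omega
      rw [cc, if_pos (by omega), Nat.choose_eq_zero_of_lt h4, Nat.cast_zero, zero_mul]


lemma coeff_lin_pow (y : ℂ) (hy : y ≠ 0) (n i : ℕ) :
    ((1 + C y * X) ^ n).coeff i = (n.choose i : ℂ) * y ^ i := by
  have h1 : (1 + C y * X : ℂ[X]) = C y * (X + C y⁻¹) := by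
    rw [mul_add, ← C_mul, mul_inv_cancel₀ hy, C_1]
    ring
  rw [h1, mul_pow, ← C_pow, coeff_C_mul, coeff_X_add_C_pow]
  rcases le_or_gt i n with h | h
  · rw [inv_pow]
    field_simp
    have hni : i + (n - i) = n := by omega
    rw [mul_right_comm, ← pow_add, Nat.sub_add_cancel h]
  · rw [Nat.choose_eq_zero_of_lt h]
    simp

lemma coeff_sq_pow (n e : ℕ) :
    ((1 + X ^ 2 : ℂ[X]) ^ n).coeff e
      = if e % 2 = 0 then (n.choose (e / 2) : ℂ) else 0 := by
  rw [add_comm, add_pow, finset_sum_coeff]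
  have h1 : ∀ k ∈ range (n + 1),
      ((X ^ 2 : ℂ[X]) ^ k * 1 ^ (n - k) * (n.choose k : ℂ[X])).coeff e
        = if e = 2 * k then (n.choose k : ℂ) else 0 := by
    intro k _
    rw [one_pow, mul_one, ← pow_mul, ← C_eq_natCast, coeff_mul_C, coeff_X_pow]
    split_ifs <;> simp
  rw [Finset.sum_congr rfl h1]
  by_cases he : e % 2 = 0
  · rw [if_pos he]
    rcases le_or_gt (e / 2) n with hen | hen
    · rw [Finset.sum_eq_single (e / 2)]
      · rw [if_pos (by omega)]
      · intro k _ hne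
        rw [if_neg (by omega)]
      · intro h2
        simp only [Finset.mem_range, not_lt] at h2
        omega
    · rw [Nat.choose_eq_zero_of_lt hen, Nat.cast_zero, Finset.sum_eq_zero]
      intro k hk
      simp only [Finset.mem_range] at hk
      rw [if_neg (by omega)]
  · rw [if_neg he, Finset.sum_eq_zero]
    intro k _
    rw [if_neg (by omega)]

lemma tri_coeff (γ : ℂ) (n N : ℕ) :
    ((1 + C γ * X + X ^ 2) ^ n).coeff N
      = ∑ i ∈ range (n + 1), (n.choose i : ℂ) * γ ^ i *
          (if i ≤ N ∧ (N - i) % 2 = 0 then (((n - i).choose ((N - i) / 2)) : ℂ) else 0) := by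
  have h0 : (1 + C γ * X + X ^ 2 : ℂ[X]) = (C γ * X) + (1 + X ^ 2) := by ring
  rw [h0, add_pow, finset_sum_coeff]
  refine Finset.sum_congr rfl fun i _ => ?_
  have h2 : ((C γ * X) ^ i * (1 + X ^ 2 : ℂ[X]) ^ (n - i) * ((n.choose i : ℕ) : ℂ[X]))
      = C ((n.choose i : ℂ) * γ ^ i) * ((1 + X ^ 2 : ℂ[X]) ^ (n - i) * X ^ i) := by
    rw [mul_pow, ← C_pow, ← C_eq_natCast, C_mul]
    ring
  rw [h2, coeff_C_mul, coeff_mul_X_pow', mul_assoc, mul_assoc]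
  congr 1
  congr 1
  by_cases hiN : i ≤ N
  · rw [if_pos hiN, coeff_sq_pow]
    by_cases hpar : (N - i) % 2 = 0
    · rw [if_pos hpar, if_pos ⟨hiN, hpar⟩]
    · rw [if_neg hpar, if_neg (by tauto)]
  · rw [if_neg hiN, if_neg (by tauto)]

lemma tri_factor (y : ℂ) (hy : y ≠ 0) :
    ((1 + C y * X) * (1 + C y⁻¹ * X) : ℂ[X]) = 1 + C (y + y⁻¹) * X + X ^ 2 := by
  have h : C y * C y⁻¹ = (1 : ℂ[X]) := by rw [← C_mul, mul_inv_cancel₀ hy, C_1]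
  rw [C_add]
  linear_combination (X ^ 2 : ℂ[X]) * h

lemma Tfd (K d : ℕ) (hd1 : 1 ≤ d) (hdK : d ≤ K) (l : ℤ) :
    ∃ x : ℝ, 1 ≤ x ∧ Tr K (ff K d) l = (x : ℂ) := by
  have hy0 : ze K ^ l ≠ 0 := zpow_ne_zero _ (ze_ne_zero K)
  have step1 : Tr K (ff K d) l
      = ((1 + C (ze K ^ l) * X) ^ (2 * K) * (1 + C (ze K ^ l)⁻¹ * X) ^ (2 * K)).coeff
          (2 * K + 2 * d) := by
    rw [coeff_mul]
    unfold Tr ff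
    have hd0 : ¬ (d = 0) := by omega
    simp only [if_neg hd0]
    rw [← Finset.sum_subset (s₁ := Finset.Icc (-((K : ℤ) + d)) ((K : ℤ) + d))
        (h := by intro t ht; simp only [Finset.mem_Icc] at ht; simp only [Wd, Finset.mem_Icc]; omega)]
    · refine Finset.sum_nbij'
        (i := fun t => (((K : ℤ) + t + d).toNat, ((K : ℤ) + d - t).toNat))
        (j := fun p => (p.1 : ℤ) - K - d) ?_ ?_ ?_ ?_ ?_
      · intro t ht
        simp only [Finset.mem_Icc] at ht
        simp only [Finset.HasAntidiagonal.mem_antidiagonal]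
        omega
      · intro p hp
        simp only [Finset.HasAntidiagonal.mem_antidiagonal] at hp
        simp only [Finset.mem_Icc]
        omega
      · intro t ht
        simp only [Finset.mem_Icc] at ht
        show ((((K : ℤ) + t + d).toNat : ℤ) - K - d) = t
        omega
      · intro p hp
        simp only [Finset.HasAntidiagonal.mem_antidiagonal] at hp
        show ((((K : ℤ) + ((p.1 : ℤ) - K - d) + d).toNat, ((K : ℤ) + d - ((p.1 : ℤ) - K - d)).toNat)) = p
        have h1 : ((K : ℤ) + ((p.1 : ℤ) - K - d) + d).toNat = p.1 := by omega
        have h2 : ((K : ℤ) + d - ((p.1 : ℤ) - K - d)).toNat = p.2 := by omega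
        rw [h1, h2]
      · intro t ht
        simp only [Finset.mem_Icc] at ht
        rw [coeff_lin_pow _ hy0, coeff_lin_pow _ (inv_ne_zero hy0)]
        have e1 : cc K ((K : ℤ) + t + d)
            = ((2 * K).choose (((K : ℤ) + t + d).toNat) : ℂ) := by
          rw [cc, if_pos (by omega)]
        have e2 : cc K ((K : ℤ) + t - d)
            = ((2 * K).choose (((K : ℤ) + d - t).toNat) : ℂ) := by
          rw [cc_symm K ((K : ℤ) + t - d)]
          have h3 : 2 * (K : ℤ) - ((K : ℤ) + t - d) = (K : ℤ) + d - t := by ring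
          rw [h3, cc, if_pos (by omega)]
        rw [e1, e2]
        have e3 : om K ^ (l * t)
            = (ze K ^ l) ^ (((K : ℤ) + t + d).toNat) * ((ze K ^ l)⁻¹) ^ (((K : ℤ) + d - t).toNat) := by
          rw [pow_pair, ze_sq]
          congr 1
          have h4 : ((((K : ℤ) + t + d).toNat : ℤ)) - (((K : ℤ) + d - t).toNat : ℤ) = 2 * t := by
            omega
          rw [h4]
          ring
        rw [e3]
        ring
    · intro t ht hnt
      simp only [Wd, Finset.mem_Icc] at ht
      simp only [Finset.mem_Icc, not_and_or, not_le] at hnt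
      rcases hnt with h | h
      · rw [cc, if_neg (by omega), zero_mul, zero_mul]
      · have h5 : 2 * K < ((K : ℤ) + t - d).toNat := by omega
        have h6 : cc K ((K : ℤ) + t - d) = 0 := by
          rw [cc, if_pos (by omega), Nat.choose_eq_zero_of_lt h5, Nat.cast_zero]
        rw [h6, mul_zero, zero_mul]
  rw [step1, ← mul_pow, tri_factor _ hy0, ze_add_inv, tri_coeff]
  refine ⟨∑ i ∈ range (2 * K + 1), ((2 * K).choose i : ℝ) * ga K l ^ i *
      (if i ≤ 2 * K + 2 * d ∧ (2 * K + 2 * d - i) % 2 = 0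
        then (((2 * K - i).choose ((2 * K + 2 * d - i) / 2)) : ℝ) else 0), ?_, ?_⟩
  · have hterm : ∀ i ∈ range (2 * K + 1),
        (0 : ℝ) ≤ ((2 * K).choose i : ℝ) * ga K l ^ i *
          (if i ≤ 2 * K + 2 * d ∧ (2 * K + 2 * d - i) % 2 = 0
            then (((2 * K - i).choose ((2 * K + 2 * d - i) / 2)) : ℝ) else 0) := by
      intro i _
      by_cases hc : i ≤ 2 * K + 2 * d ∧ (2 * K + 2 * d - i) % 2 = 0
      · rw [if_pos hc]
        have hieven : Even i := by
          rcases hc with ⟨h7, h8⟩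
          exact Nat.even_iff.mpr (by omega)
        have := hieven.pow_nonneg (ga K l)
        positivity
      · rw [if_neg hc, mul_zero]
    have h0th : ((2 * K).choose 0 : ℝ) * ga K l ^ 0 *
        (if 0 ≤ 2 * K + 2 * d ∧ (2 * K + 2 * d - 0) % 2 = 0
          then (((2 * K - 0).choose ((2 * K + 2 * d - 0) / 2)) : ℝ) else 0)
        = ((2 * K).choose (K + d) : ℝ) := by
      rw [if_pos (by omega)]
      have h9 : (2 * K + 2 * d - 0) / 2 = K + d := by omega
      rw [h9]
      simp
    have hone : (1 : ℝ) ≤ ((2 * K).choose (K + d) : ℝ) := by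
      have := Nat.choose_pos (show K + d ≤ 2 * K by omega)
      exact_mod_cast this
    calc (1 : ℝ) ≤ ((2 * K).choose (K + d) : ℝ) := hone
      _ = _ := h0th.symm
      _ ≤ _ := Finset.single_le_sum hterm (by simp)
  · push_cast [apply_ite (fun x : ℝ => (x : ℂ))]
    rfl

lemma Tf0_nonneg (K : ℕ) (l : ℤ) : ∃ a : ℝ, 0 ≤ a ∧ Tr K (ff K 0) l = (a : ℂ) :=
  ⟨ga K l ^ (2 * K), Even.pow_nonneg ⟨K, by ring⟩ _, Tf0 K l⟩

lemma Tf0_at0 (K : ℕ) : ∃ a : ℝ, 0 < a ∧ Tr K (ff K 0) 0 = (a : ℂ) := by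
  refine ⟨ga K 0 ^ (2 * K), ?_, Tf0 K 0⟩
  have : ga K 0 = 2 := by
    simp [ga]
  rw [this]
  positivity

lemma key_pos (K : ℕ) (u v : ℤ → ℂ) (s : ℤ)
    (hu : ∀ l : ℤ, ∃ a : ℝ, 0 ≤ a ∧ Tr K u l = (a : ℂ))
    (hu0 : ∃ a : ℝ, 0 < a ∧ Tr K u 0 = (a : ℂ))
    (hv : ∀ j : ℤ, ∃ b : ℝ, 0 < b ∧ Tr K v j = (b : ℂ)) :
    ∃ x : ℝ, 0 < x ∧ Tr K (fun t => u t * v t) s = (x : ℂ) := by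
  have hMpos : 0 < (Mn K : ℝ) := by
    have : 0 < Mn K := by simp [Mn]
    exact_mod_cast this
  have hc := conv K u v s
  have hreal : ∀ l ∈ range (Mn K), Tr K u l * Tr K v (s - l)
      = (((Tr K u (l : ℤ)).re * (Tr K v (s - (l : ℤ))).re : ℝ) : ℂ) := by
    intro l _
    obtain ⟨a, _, hae⟩ := hu (l : ℤ)
    obtain ⟨b, _, hbe⟩ := hv (s - (l : ℤ))
    rw [hae, hbe, Complex.ofReal_re, Complex.ofReal_re]
    push_cast
    ring
  set S : ℝ := ∑ l ∈ range (Mn K), (Tr K u ((l : ℕ) : ℤ)).re * (Tr K v (s - ((l : ℕ) : ℤ))).re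
    with hS
  have hSpos : 0 < S := by
    apply Finset.sum_pos'
    · intro l _
      obtain ⟨a, ha, hae⟩ := hu (l : ℤ)
      obtain ⟨b, hb, hbe⟩ := hv (s - (l : ℤ))
      rw [hae, hbe, Complex.ofReal_re, Complex.ofReal_re]
      exact mul_nonneg ha hb.le
    · refine ⟨0, by simp [Mn], ?_⟩
      obtain ⟨a, ha, hae⟩ := hu0
      obtain ⟨b, hb, hbe⟩ := hv (s - ((0 : ℕ) : ℤ))
      rw [show (((0 : ℕ) : ℤ)) = (0 : ℤ) by norm_num] at *
      rw [hae, hbe, Complex.ofReal_re, Complex.ofReal_re]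
      exact mul_pos ha hb
  refine ⟨S / (Mn K : ℝ), by positivity, ?_⟩
  have h2 : (Mn K : ℂ) * Tr K (fun t => u t * v t) s = ((S : ℝ) : ℂ) := by
    rw [← hc, Finset.sum_congr rfl hreal, hS]
    push_cast
    rfl
  have h3 : Tr K (fun t => u t * v t) s = (S : ℂ) / (Mn K : ℂ) := by
    rw [eq_div_iff (Mn_ne_zero K)]
    linear_combination h2
  rw [h3, Complex.ofReal_div]
  norm_num

lemma gg_pos (K n : ℕ) : 1 ≤ n → n ≤ K → ∀ s : ℤ, ∃ x : ℝ, 0 < x ∧ Tr K (gg K n) s = (x : ℂ) := by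
  induction n with
  | zero => omega
  | succ d ih =>
    intro _ hdK s
    have hgg : gg K (d + 1) = fun t => gg K d t * ff K (d + 1) t := rfl
    rw [hgg]
    rcases Nat.eq_zero_or_pos d with rfl | hd
    · exact key_pos K (ff K 0) (ff K 1) s (Tf0_nonneg K) (Tf0_at0 K)
        (fun j => Tfd K 1 le_rfl (by omega) j |>.imp fun b hb => ⟨by linarith [hb.1], hb.2⟩)
    · refine key_pos K (gg K d) (ff K (d + 1)) s ?_ ?_ ?_
      · intro l
        obtain ⟨x, hx, he⟩ := ih hd (by omega) l
        exact ⟨x, hx.le, he⟩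
      · exact ih hd (by omega) 0
      · intro j
        obtain ⟨b, hb, he⟩ := Tfd K (d + 1) (by omega) (by omega) j
        exact ⟨b, by linarith, he⟩

lemma gg_eq_prod (K q : ℕ) (t : ℤ) :
    gg K q t = ∏ ν ∈ range (2 * q + 1), cc K ((K : ℤ) + t + (ν : ℤ) - (q : ℤ)) := by
  induction q with
  | zero =>
    simp only [gg, ff, if_pos rfl]
    rw [show 2 * 0 + 1 = 1 from rfl, Finset.prod_range_one]
    norm_num
  | succ d ih =>
    have h3 : ∀ ν ∈ range (2 * d + 1),
        cc K ((K : ℤ) + t + ((ν + 1 : ℕ) : ℤ) - ((d + 1 : ℕ) : ℤ))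
          = cc K ((K : ℤ) + t + (ν : ℤ) - (d : ℤ)) := by
      intro ν _
      congr 1
      push_cast
      ring
    have hr : (∏ ν ∈ range (2 * (d + 1) + 1), cc K ((K : ℤ) + t + (ν : ℤ) - ((d + 1 : ℕ) : ℤ)))
        = (∏ ν ∈ range (2 * d + 1), cc K ((K : ℤ) + t + (ν : ℤ) - (d : ℤ)))
            * (cc K ((K : ℤ) + t + ((d + 1 : ℕ) : ℤ)) * cc K ((K : ℤ) + t - ((d + 1 : ℕ) : ℤ))) := by
      rw [show 2 * (d + 1) + 1 = (2 * d + 2) + 1 by ring, Finset.prod_range_succ,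
        Finset.prod_range_succ', Finset.prod_congr rfl h3]
      have h4 : (K : ℤ) + t + ((0 : ℕ) : ℤ) - ((d + 1 : ℕ) : ℤ)
          = (K : ℤ) + t - ((d + 1 : ℕ) : ℤ) := by push_cast; ring
      have h5 : (K : ℤ) + t + ((2 * d + 2 : ℕ) : ℤ) - ((d + 1 : ℕ) : ℤ)
          = (K : ℤ) + t + ((d + 1 : ℕ) : ℤ) := by push_cast; ring
      rw [h4, h5]
      ring
    rw [show gg K (d + 1) t = gg K d t * ff K (d + 1) t from rfl, ih, hr, ff,
      if_neg (by omega)]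

lemma gg_supp (m q : ℕ) (t : ℤ) (h : t < -(m : ℤ) ∨ (m : ℤ) < t) :
    gg (m + q) q t = 0 := by
  rw [gg_eq_prod]
  rcases h with h | h
  · refine Finset.prod_eq_zero (Finset.mem_range.mpr (show 0 < 2 * q + 1 by omega)) ?_
    rw [cc, if_neg (by push_cast; omega)]
  · refine Finset.prod_eq_zero (i := 2 * q) (Finset.mem_range.mpr (by omega)) ?_
    rw [cc, if_pos (by push_cast; omega)]
    rw [Nat.choose_eq_zero_of_lt (by push_cast; omega), Nat.cast_zero]

lemma ze_pow_M (K : ℕ) : ze K ^ ((Mn K : ℕ) : ℤ) = -1 := by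
  rw [ze_zpow_exp]
  have hM : ((Mn K : ℕ) : ℝ) ≠ 0 := Nat.cast_ne_zero.mpr (by simp [Mn])
  have h1 : (Real.pi * (((Mn K : ℕ) : ℤ) : ℝ) / ((Mn K : ℕ) : ℝ)) = Real.pi := by
    push_cast
    field_simp
  rw [h1, Complex.exp_pi_mul_I]

lemma om_half (K : ℕ) : om K ^ ((2 * K + 1 : ℕ) : ℤ) = -1 := by
  rw [ze_sq]
  have h1 : (2 : ℤ) * ((2 * K + 1 : ℕ) : ℤ) = ((Mn K : ℕ) : ℤ) := by
    simp [Mn]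
    push_cast
    ring
  rw [h1, ze_pow_M]

lemma bridge1 (m q : ℕ) :
    (-1 : ℂ) ^ m * Tr (m + q) (gg (m + q) q) (((2 * (m + q) + 1 : ℕ) : ℤ))
      = ∑ j ∈ range (2 * m + 1),
          (-1 : ℂ) ^ j * ∏ ν ∈ range (2 * q + 1), ((2 * (m + q)).choose (j + ν) : ℂ) := by
  have hsign : ∀ t : ℤ, om (m + q) ^ ((((2 * (m + q) + 1 : ℕ) : ℤ)) * t) = (-1 : ℂ) ^ t := by
    intro t
    rw [zpow_mul, om_half]
  have step1 : Tr (m + q) (gg (m + q) q) (((2 * (m + q) + 1 : ℕ) : ℤ))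
      = ∑ t ∈ Finset.Icc (-(m : ℤ)) (m : ℤ), gg (m + q) q t * (-1 : ℂ) ^ t := by
    unfold Tr
    rw [← Finset.sum_subset (s₁ := Finset.Icc (-(m : ℤ)) (m : ℤ))
        (h := by intro t ht; simp only [Finset.mem_Icc] at ht; simp only [Wd, Finset.mem_Icc]; omega)]
    · exact Finset.sum_congr rfl fun t _ => by rw [hsign]
    · intro t ht hnt
      simp only [Finset.mem_Icc] at hnt
      rw [gg_supp m q t (by omega), zero_mul]
  rw [step1, Finset.mul_sum]
  refine Finset.sum_nbij' (i := fun t => (t + (m : ℤ)).toNat) (j := fun j => (j : ℤ) - (m : ℤ))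
    ?_ ?_ ?_ ?_ ?_
  · intro t ht
    simp only [Finset.mem_Icc] at ht
    simp only [Finset.mem_range]
    omega
  · intro j hj
    simp only [Finset.mem_range] at hj
    simp only [Finset.mem_Icc]
    omega
  · intro t ht
    simp only [Finset.mem_Icc] at ht
    show (((t + (m : ℤ)).toNat : ℤ) - (m : ℤ)) = t
    omega
  · intro j hj
    simp only [Finset.mem_range] at hj
    show ((((j : ℤ) - (m : ℤ)) + (m : ℤ)).toNat) = j
    omega
  · intro t ht
    simp only [Finset.mem_Icc] at ht
    have hprod : gg (m + q) q t
        = ∏ ν ∈ range (2 * q + 1), (((2 * (m + q)).choose ((t + (m : ℤ)).toNat + ν)) : ℂ) := by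
      rw [gg_eq_prod]
      refine Finset.prod_congr rfl fun ν _ => ?_
      have harg : ((m + q : ℕ) : ℤ) + t + (ν : ℤ) - (q : ℤ)
          = (((t + (m : ℤ)).toNat + ν : ℕ) : ℤ) := by
        push_cast
        omega
      rw [harg, cc, if_pos (Int.natCast_nonneg _), Int.toNat_natCast]
    have hsgn : (-1 : ℂ) ^ m * (-1 : ℂ) ^ t = (-1 : ℂ) ^ ((t + (m : ℤ)).toNat) := by
      have h2 : (-1 : ℂ) ^ m = (-1 : ℂ) ^ ((m : ℕ) : ℤ) := by rw [zpow_natCast]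
      have h3 : (-1 : ℂ) ^ ((t + (m : ℤ)).toNat) = (-1 : ℂ) ^ (((t + (m : ℤ)).toNat : ℕ) : ℤ) := by
        rw [zpow_natCast]
      have h4 : ((((t + (m : ℤ)).toNat : ℕ)) : ℤ) = (m : ℤ) + t := by omega
      rw [h2, h3, h4, ← zpow_add₀ (by norm_num : (-1 : ℂ) ≠ 0)]
    rw [hprod, ← hsgn]
    ring

lemma bridge2 (m q : ℕ) :
    (Nkr (2 * (m + q)) (2 * q + 1) : ℂ)
      = ∑ j ∈ range (2 * m + 1),
          (-1 : ℂ) ^ j * ∏ ν ∈ range (2 * q + 1), ((2 * (m + q)).choose (j + ν) : ℂ) := by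
  unfold Nkr
  push_cast
  rw [← Finset.sum_subset (s₁ := range (2 * m + 1))
      (h := by intro j hj; simp only [Finset.mem_range] at *; omega)]
  · refine Finset.sum_congr rfl fun j _ => ?_
    congr 1
    rw [pow_mul]
    congr 1
    have : Odd (2 * q + 1) := ⟨q, by ring⟩
    rw [this.neg_one_pow]
  · intro j hj hnj
    simp only [Finset.mem_range] at hj hnj
    have hz : ((2 * (m + q)).choose (j + 2 * q) : ℂ) = 0 := by
      rw [Nat.choose_eq_zero_of_lt (by omega), Nat.cast_zero]
    rw [Finset.prod_eq_zero (i := 2 * q) (Finset.mem_range.mpr (by omega)) hz, mul_zero]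

/-- The odd case. -/
lemma odd_case (m q : ℕ) (hq : 1 ≤ q) : Nkr (2 * (m + q)) (2 * q + 1) ≠ 0 := by
  obtain ⟨x, hx, he⟩ := gg_pos (m + q) q hq (by omega) (((2 * (m + q) + 1 : ℕ) : ℤ))
  intro h0
  have hb := (bridge1 m q).trans (bridge2 m q).symm
  rw [he, h0] at hb
  push_cast at hb
  have : x = 0 := by
    have h1 : (-1 : ℂ) ^ m ≠ 0 := pow_ne_zero _ (by norm_num)
    have h2 : ((x : ℝ) : ℂ) = 0 := by
      field_simp at hb
      exact (mul_eq_zero.mp hb).resolve_left h1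
    exact_mod_cast h2
  linarith

/-- The even case. -/
lemma even_case (k r : ℕ) (hr2 : 2 ≤ r) (hrk : r ≤ k + 1) (hre : Even r) (hke : Even k) :
    Nkr k r ≠ 0 := by
  have hrk' : r ≤ k := by
    obtain ⟨a, ha⟩ := hre
    obtain ⟨b, hb⟩ := hke
    omega
  have hpos : 0 < Nkr k r := by
    unfold Nkr
    apply Finset.sum_pos
    · intro j hj
      simp only [Finset.mem_range] at hj
      have h1 : (-1 : ℤ) ^ (r * j) = 1 := (hre.mul_right j).neg_one_pow
      rw [h1, one_mul]
      apply Finset.prod_pos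
      intro ν hν
      simp only [Finset.mem_range] at hν
      have : j + ν ≤ k := by omega
      exact_mod_cast Nat.choose_pos this
    · exact ⟨0, Finset.mem_range.mpr (by omega)⟩
  omega

end Stmt8

/-- For every even integer `k ≥ 2` and every integer `r` with `2 ≤ r ≤ k + 1`,
one has `N_{k,r} ≠ 0`. -/
theorem stmt8 (k r : ℕ) (hk : 2 ≤ k) (hke : Even k) (hr : 2 ≤ r) (hrk : r ≤ k + 1) :
    Nkr k r ≠ 0 := by
  rcases Nat.even_or_odd r with hre | hro
  · exact Stmt8.even_case k r hr hrk hre hke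
  · obtain ⟨q, hq⟩ := hro
    obtain ⟨K, hK⟩ := hke
    have hq1 : 1 ≤ q := by omega
    have hqK : q ≤ K := by omega
    have hm : k = 2 * ((K - q) + q) := by omega
    have hrq : r = 2 * q + 1 := by omega
    rw [hm, hrq]
    exact Stmt8.odd_case (K - q) q hq1
end
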